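/- Let P be a finite poset on [d] whose Hasse diagram contains a cycle, with an edge {i,j} (i ≺ j a cover relation) lying on a cycle. Then there exists an edge partition ℓ of P such that the order-chain polytope OC_ℓ(P) = O(P'_ℓ) ∩ C(P''_ℓ) has a non-integral vertex; specifically the partition ℓ = (E(P)∖{e}, {e}) with e = {i,j} yields a vertex with some coordinates equal to 1/2. -/

import Mathlib

/-- `b` covers `a` in the partial order `r`. -/
def covRel {α : Type*} (r : α → α → Prop) (a b : α) : Prop :=
  r a b ∧ a ≠ b ∧ ∀ c, r a c → r c b → c = a ∨ c = b

/-- The partial order generated by a set of (cover) relations `e`. -/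
def genOrd {d : ℕ} (e : Fin d → Fin d → Prop) : Fin d → Fin d → Prop :=
  Relation.ReflTransGen e

/-- The order polytope of a partial order `r` on `Fin d`. -/
def orderPolytope {d : ℕ} (r : Fin d → Fin d → Prop) : Set (Fin d → ℝ) :=
  {x | (∀ i, 0 ≤ x i ∧ x i ≤ 1) ∧ ∀ i j, r i j → x j ≤ x i}

/-- The chain polytope of a partial order `r` on `Fin d`. -/
def chainPolytope {d : ℕ} (r : Fin d → Fin d → Prop) : Set (Fin d → ℝ) :=
  {x | (∀ i, 0 ≤ x i) ∧
    ∀ C : Finset (Fin d), IsMaxChain r (C : Set (Fin d)) → ∑ i ∈ C, x i ≤ 1}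

/-- The Hasse diagram of `r`, as an undirected simple graph. -/
def hasseGraph {d : ℕ} (r : Fin d → Fin d → Prop) : SimpleGraph (Fin d) where
  Adj a b := (covRel r a b ∨ covRel r b a) ∧ a ≠ b
  symm := ⟨fun a b h => ⟨h.1.symm, h.2.symm⟩⟩
  loopless := ⟨fun a h => h.2 rfl⟩

/-- Symmetrization of the cover relations of `r` with the edge `(i,j)` removed. -/
def sRel {d : ℕ} (r : Fin d → Fin d → Prop) (i j : Fin d) (a b : Fin d) : Prop :=
  (covRel r a b ∧ ¬ (a = i ∧ b = j)) ∨ (covRel r b a ∧ ¬ (b = i ∧ a = j))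

lemma sRel_symm {d : ℕ} (r : Fin d → Fin d → Prop) (i j : Fin d) {a b : Fin d}
    (h : sRel r i j a b) : sRel r i j b a := h.symm

/-- if the Hasse diagram of `P` contains a cycle through the cover edge
`{i,j}`, then the edge partition `ℓ = (E(P)∖{e}, {e})` with `e = {i,j}` yields an
order-chain polytope with a (non-integral) vertex having a coordinate equal to `1/2`. -/
theorem stmt_14 (d : ℕ) (r : Fin d → Fin d → Prop) (hpo : IsPartialOrder (Fin d) r)
    (i j : Fin d) (hij : covRel r i j)
    (hcyc : ∃ (a : Fin d) (w : (hasseGraph r).Walk a a),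
      w.IsCycle ∧ s(i, j) ∈ w.edges) :
    ∃ v ∈ Set.extremePoints ℝ
        (orderPolytope (genOrd fun a b : Fin d => covRel r a b ∧ ¬ (a = i ∧ b = j)) ∩
         chainPolytope (genOrd fun a b : Fin d => covRel r a b ∧ (a = i ∧ b = j))),
      ∃ k : Fin d, v k = 1 / 2 := by
  classical
  obtain ⟨hrij, hne, -⟩ := id hij
  -- notation
  have hRstep : ∀ a b : Fin d, sRel r i j a b →
      (Relation.ReflTransGen (sRel r i j) i a ↔ Relation.ReflTransGen (sRel r i j) i b) := by
    intro a b hab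
    exact ⟨fun h => h.tail hab, fun h => h.tail (sRel_symm r i j hab)⟩
  -- characterization of the second generated order
  have hg2 : ∀ a b : Fin d, genOrd (fun a b : Fin d => covRel r a b ∧ (a = i ∧ b = j)) a b ↔
      (a = b ∨ (a = i ∧ b = j)) := by
    intro a b
    constructor
    · intro h
      have h' : Relation.ReflTransGen (fun a b : Fin d => covRel r a b ∧ (a = i ∧ b = j)) a b := h
      clear h
      induction h' with
      | refl => exact Or.inl rfl
      | tail h1 h2 ih =>
        obtain ⟨-, hci, hbj⟩ := h2
        rcases ih with rfl | ⟨rfl, rfl⟩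
        · exact Or.inr ⟨hci, hbj⟩
        · exact absurd hci.symm hne
    · rintro (rfl | ⟨rfl, rfl⟩)
      · exact Relation.ReflTransGen.refl
      · exact Relation.ReflTransGen.single ⟨hij, rfl, rfl⟩
  -- {i, j} is a maximal chain of the second order
  have hmaxij : IsMaxChain (genOrd (fun a b : Fin d => covRel r a b ∧ (a = i ∧ b = j)))
      (({i, j} : Finset (Fin d)) : Set (Fin d)) := by
    have hcoe : (({i, j} : Finset (Fin d)) : Set (Fin d)) = {i, j} := by simp
    rw [hcoe]
    constructor
    · rintro x (rfl | rfl) y (rfl | rfl) hxy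
      · exact absurd rfl hxy
      · exact Or.inl ((hg2 _ _).2 (Or.inr ⟨rfl, rfl⟩))
      · exact Or.inr ((hg2 _ _).2 (Or.inr ⟨rfl, rfl⟩))
      · exact absurd rfl hxy
    · intro t ht hsub
      refine Set.Subset.antisymm hsub fun x hx => ?_
      by_cases hxi : x = i
      · exact Or.inl hxi
      by_cases hxj : x = j
      · exact Or.inr hxj
      have hi : i ∈ t := hsub (Or.inl rfl)
      rcases ht hx hi hxi with h | h
      · rcases (hg2 _ _).1 h with h' | ⟨rfl, -⟩
        · exact absurd h' hxi
        · exact absurd rfl hxi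
      · rcases (hg2 _ _).1 h with h' | ⟨-, rfl⟩
        · exact absurd h'.symm hxi
        · exact absurd rfl hxj
  -- any chain of the second order has at most 2 elements
  have hcard : ∀ C : Finset (Fin d),
      IsChain (genOrd (fun a b : Fin d => covRel r a b ∧ (a = i ∧ b = j))) (C : Set (Fin d)) →
      C.card ≤ 2 := by
    intro C hC
    by_contra hlt
    push_neg at hlt
    obtain ⟨a, b, c, ha, hb, hc, hab, hac, hbc⟩ := Finset.two_lt_card_iff.1 hlt
    have key : ∀ x y : Fin d, x ∈ C → y ∈ C → x ≠ y → (x = i ∧ y = j) ∨ (y = i ∧ x = j) := by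
      intro x y hx hy hxy
      rcases hC hx hy hxy with h | h
      · rcases (hg2 _ _).1 h with h' | h'
        · exact absurd h' hxy
        · exact Or.inl h'
      · rcases (hg2 _ _).1 h with h' | h'
        · exact absurd h'.symm hxy
        · exact Or.inr h'
    rcases key a b ha hb hab with ⟨hai, hbj⟩ | ⟨hbi, haj⟩ <;>
      rcases key a c ha hc hac with ⟨hai2, hcj⟩ | ⟨hci, haj2⟩
    · exact hbc (hbj.trans hcj.symm)
    · exact hne (hai.symm.trans haj2)
    · exact hne (hai2.symm.trans haj)
    · exact hbc (hbi.trans hci.symm)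
  -- reachability is preserved along the first generated order
  have hg1R : ∀ a b : Fin d,
      genOrd (fun a b : Fin d => covRel r a b ∧ ¬ (a = i ∧ b = j)) a b →
      (Relation.ReflTransGen (sRel r i j) i a ↔ Relation.ReflTransGen (sRel r i j) i b) := by
    intro a b h
    have h' : Relation.ReflTransGen (fun a b : Fin d => covRel r a b ∧ ¬ (a = i ∧ b = j)) a b := h
    clear h
    induction h' with
    | refl => exact Iff.rfl
    | tail h1 h2 ih => exact ih.trans (hRstep _ _ (Or.inl h2))
  -- connectivity: j is reachable from i avoiding the edge {i,j}
  have hRij : Relation.ReflTransGen (sRel r i j) i j := by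
    have hadj : (hasseGraph r).Adj i j := ⟨Or.inl hij, hne⟩
    have hreach : ((hasseGraph r) \ SimpleGraph.fromEdgeSet {s(i, j)}).Reachable i j :=
      (SimpleGraph.adj_and_reachable_delete_edges_iff_exists_cycle.2 hcyc).2
    obtain ⟨p⟩ := hreach
    have key : ∀ (a b : Fin d)
        (_ : ((hasseGraph r) \ SimpleGraph.fromEdgeSet {s(i, j)}).Walk a b),
        Relation.ReflTransGen (sRel r i j) a b := by
      intro a b q
      induction q with
      | nil => exact Relation.ReflTransGen.refl
      | @cons u x w h q ih =>
        refine Relation.ReflTransGen.head ?_ ih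
        rw [SimpleGraph.sdiff_adj] at h
        obtain ⟨hadj', hnot⟩ := h
        have hneq : ¬ (s(u, x) = s(i, j)) := by
          intro hh
          exact hnot (by rw [SimpleGraph.fromEdgeSet_adj]; exact ⟨Set.mem_singleton_iff.2 hh, hadj'.ne⟩)
        obtain ⟨hcov | hcov, hune⟩ := hadj'
        · refine Or.inl ⟨hcov, ?_⟩
          rintro ⟨rfl, rfl⟩
          exact hneq rfl
        · refine Or.inr ⟨hcov, ?_⟩
          rintro ⟨rfl, rfl⟩
          exact hneq Sym2.eq_swap
    exact key i j p
  -- the candidate vertex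
  set v : Fin d → ℝ := fun k => if Relation.ReflTransGen (sRel r i j) i k then 1 / 2 else 0
    with hv
  have hvhalf : ∀ k, Relation.ReflTransGen (sRel r i j) i k → v k = 1 / 2 := by
    intro k hk; rw [hv]; simp only [if_pos hk]
  have hvzero : ∀ k, ¬ Relation.ReflTransGen (sRel r i j) i k → v k = 0 := by
    intro k hk; rw [hv]; simp only [if_neg hk]
  have hvi : v i = 1 / 2 := hvhalf i Relation.ReflTransGen.refl
  have hvj : v j = 1 / 2 := hvhalf j hRij
  -- membership of v
  have hvmem : v ∈
      orderPolytope (genOrd fun a b : Fin d => covRel r a b ∧ ¬ (a = i ∧ b = j)) ∩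
      chainPolytope (genOrd fun a b : Fin d => covRel r a b ∧ (a = i ∧ b = j)) := by
    constructor
    · constructor
      · intro k
        by_cases hk : Relation.ReflTransGen (sRel r i j) i k
        · rw [hvhalf k hk]; norm_num
        · rw [hvzero k hk]; norm_num
      · intro a b hab
        by_cases hk : Relation.ReflTransGen (sRel r i j) i a
        · rw [hvhalf a hk, hvhalf b ((hg1R a b hab).1 hk)]
        · rw [hvzero a hk, hvzero b (fun h => hk ((hg1R a b hab).2 h))]
    · constructor
      · intro k
        by_cases hk : Relation.ReflTransGen (sRel r i j) i k
        · rw [hvhalf k hk]; norm_num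
        · rw [hvzero k hk]
      · intro C hC
        have hc2 := hcard C hC.1
        have hhalf : ∀ k ∈ C, v k ≤ 1 / 2 := by
          intro k _
          by_cases hk : Relation.ReflTransGen (sRel r i j) i k
          · rw [hvhalf k hk]
          · rw [hvzero k hk]; norm_num
        calc ∑ k ∈ C, v k ≤ ∑ _k ∈ C, (1 : ℝ) / 2 := Finset.sum_le_sum hhalf
          _ = (C.card : ℝ) * (1 / 2) := by rw [Finset.sum_const, nsmul_eq_mul]
          _ ≤ 2 * (1 / 2) := by
              have h2 : (C.card : ℝ) ≤ 2 := by exact_mod_cast hc2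
              nlinarith
          _ = 1 := by norm_num
  refine ⟨v, ?_, i, hvi⟩
  rw [mem_extremePoints]
  refine ⟨hvmem, ?_⟩
  rintro x hx y hy ⟨a, b, ha, hb, hab, heq⟩
  have hpt : ∀ k, a * x k + b * y k = v k := by
    intro k
    have := congrFun heq k
    simpa using this
  -- the coordinates of x and y are constant along sRel-paths from i
  have step : ∀ p q : Fin d, (covRel r p q ∧ ¬ (p = i ∧ q = j)) →
      Relation.ReflTransGen (sRel r i j) i p → Relation.ReflTransGen (sRel r i j) i q →
      x q = x p ∧ y q = y p := by
    intro p q hpq hip hiq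
    have hord : genOrd (fun a b : Fin d => covRel r a b ∧ ¬ (a = i ∧ b = j)) p q :=
      Relation.ReflTransGen.single hpq
    have hxq : x q ≤ x p := hx.1.2 p q hord
    have hyq : y q ≤ y p := hy.1.2 p q hord
    have h1 : a * x p + b * y p = 1 / 2 := by rw [hpt p, hvhalf p hip]
    have h2 : a * x q + b * y q = 1 / 2 := by rw [hpt q, hvhalf q hiq]
    have hby : b * y q ≤ b * y p := mul_le_mul_of_nonneg_left hyq hb.le
    have hax : a * x p ≤ a * x q := by linarith
    have hxe : x q = x p := le_antisymm hxq (le_of_mul_le_mul_left hax ha)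
    have hbx : a * x q ≤ a * x p := mul_le_mul_of_nonneg_left hxq ha.le
    have hay : b * y p ≤ b * y q := by linarith
    exact ⟨hxe, le_antisymm hyq (le_of_mul_le_mul_left hay hb)⟩
  have hconst : ∀ k, Relation.ReflTransGen (sRel r i j) i k → x k = x i ∧ y k = y i := by
    intro k hk
    induction hk with
    | refl => exact ⟨rfl, rfl⟩
    | @tail c k' hic hS ih =>
      have hik' : Relation.ReflTransGen (sRel r i j) i k' := hic.tail hS
      rcases hS with h | h
      · obtain ⟨h1, h2⟩ := step c k' h hic hik'
        exact ⟨h1.trans ih.1, h2.trans ih.2⟩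
      · obtain ⟨h1, h2⟩ := step k' c h hik' hic
        exact ⟨h1 ▸ ih.1, h2 ▸ ih.2⟩
  -- x i = y i = 1/2
  have hsumx : x i + x j ≤ 1 := by
    have := hx.2.2 ({i, j} : Finset (Fin d)) hmaxij
    rwa [Finset.sum_pair hne] at this
  have hsumy : y i + y j ≤ 1 := by
    have := hy.2.2 ({i, j} : Finset (Fin d)) hmaxij
    rwa [Finset.sum_pair hne] at this
  have hxj : x j = x i := (hconst j hRij).1
  have hyj : y j = y i := (hconst j hRij).2
  have hxi2 : x i ≤ 1 / 2 := by linarith [hxj ▸ hsumx]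
  have hyi2 : y i ≤ 1 / 2 := by linarith [hyj ▸ hsumy]
  have hi1 : a * x i + b * y i = 1 / 2 := by rw [hpt i, hvi]
  have hxihalf : x i = 1 / 2 := by
    refine le_antisymm hxi2 ?_
    have hby : b * y i ≤ b * (1 / 2) := mul_le_mul_of_nonneg_left hyi2 hb.le
    have : a * (1 / 2) ≤ a * x i := by nlinarith
    exact le_of_mul_le_mul_left this ha
  have hyihalf : y i = 1 / 2 := by
    refine le_antisymm hyi2 ?_
    have hax : a * x i ≤ a * (1 / 2) := mul_le_mul_of_nonneg_left hxi2 ha.le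
    have : b * (1 / 2) ≤ b * y i := by nlinarith
    exact le_of_mul_le_mul_left this hb
  constructor
  · funext k
    by_cases hk : Relation.ReflTransGen (sRel r i j) i k
    · rw [(hconst k hk).1, hxihalf, hvhalf k hk]
    · rw [hvzero k hk]
      have h0 : a * x k + b * y k = 0 := by rw [hpt k, hvzero k hk]
      have hx0 : 0 ≤ x k := (hx.1.1 k).1
      have hy0 : 0 ≤ y k := (hy.1.1 k).1
      have hax : a * x k = 0 := by nlinarith [mul_nonneg ha.le hx0, mul_nonneg hb.le hy0]
      rcases mul_eq_zero.1 hax with h | h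
      · exact absurd h ha.ne'
      · exact h
  · funext k
    by_cases hk : Relation.ReflTransGen (sRel r i j) i k
    · rw [(hconst k hk).2, hyihalf, hvhalf k hk]
    · rw [hvzero k hk]
      have h0 : a * x k + b * y k = 0 := by rw [hpt k, hvzero k hk]
      have hx0 : 0 ≤ x k := (hx.1.1 k).1
      have hy0 : 0 ≤ y k := (hy.1.1 k).1
      have hby : b * y k = 0 := by nlinarith [mul_nonneg ha.le hx0, mul_nonneg hb.le hy0]
      rcases mul_eq_zero.1 hby with h | h
      · exact absurd h hb.ne'
      · exact h
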